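/- Let (G, 𝒫, 𝒯) be an instance of Partitioned Vertex Cover with solution U, let H be the Popular Matching instance constructed from (G, 𝒫, 𝒯), and let M* be the matching in H constructed from U. Then there is no alternating cycle in H_{M*} that contains a vertex u^e_i for any edge e of G and endpoint i of e. -/

import Mathlib

open SimpleGraph

universe u

/-- A matching: a set of edges of `G` that are pairwise vertex-disjoint. -/
def IsMatching {W : Type u} (G : SimpleGraph W) (M : Set (Sym2 W)) : Prop :=
  M ⊆ G.edgeSet ∧ ∀ e ∈ M, ∀ e' ∈ M, e ≠ e' → ∀ v : W, v ∈ e → v ∉ e'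

/-- `v` is matched by `M`. -/
def Matched {W : Type u} (M : Set (Sym2 W)) (v : W) : Prop := ∃ w : W, s(v, w) ∈ M

open scoped Classical in
/-- `rank G pref M v = pref v (M(v))`, with the convention `|N(v)|+1` if `v` is unmatched. -/
noncomputable def rank {W : Type u} (G : SimpleGraph W) (pref : W → W → ℕ)
    (M : Set (Sym2 W)) (v : W) : ℕ :=
  if h : ∃ w : W, s(v, w) ∈ M then pref v h.choose else (G.neighborSet v).ncard + 1

/-- The number of vertices preferring `M` over `M'`. -/
noncomputable def vote {W : Type u} (G : SimpleGraph W) (pref : W → W → ℕ)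
    (M M' : Set (Sym2 W)) : ℕ :=
  {v : W | rank G pref M v < rank G pref M' v}.ncard

/-- A popular matching: no other matching is more popular. -/
def IsPopular {W : Type u} (G : SimpleGraph W) (pref : W → W → ℕ) (M : Set (Sym2 W)) : Prop :=
  IsMatching G M ∧
    ∀ M' : Set (Sym2 W), IsMatching G M' → vote G pref M' M ≤ vote G pref M M'

/-- Each vertex has a strict preference list: `pref v` is a bijection from the
neighborhood of `v` onto `{1, …, |N(v)|}`. -/
def HasPref {W : Type u} (G : SimpleGraph W) (pref : W → W → ℕ) : Prop :=
  ∀ v : W, Set.BijOn (pref v) (G.neighborSet v) (Set.Icc 1 (G.neighborSet v).ncard)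

/-- The edge `e ∉ M` is labeled `+2` by `label_M` (given rank function `rk`):
both endpoints prefer each other over their status in `M`. -/
def EdgePlus {W : Type u} (pref : W → W → ℕ) (rk : W → ℕ) (e : Sym2 W) : Prop :=
  ∃ x y : W, e = s(x, y) ∧ pref x y < rk x ∧ pref y x < rk y

/-- The edge `e ∉ M` is labeled `-2` by `label_M` (given rank function `rk`):
both endpoints prefer their status in `M` over each other. -/
def EdgeMinus {W : Type u} (pref : W → W → ℕ) (rk : W → ℕ) (e : Sym2 W) : Prop :=
  ∃ x y : W, e = s(x, y) ∧ rk x < pref x y ∧ rk y < pref y x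

/-- The graph `G_M`: the spanning subgraph of `G` consisting of the edges of `M`
together with the edges not labeled `-2`. -/
def GMgraph {W : Type u} (G : SimpleGraph W) (pref : W → W → ℕ) (M : Set (Sym2 W)) :
    SimpleGraph W where
  Adj x y := G.Adj x y ∧ (s(x, y) ∈ M ∨ ¬ EdgeMinus pref (rank G pref M) s(x, y))
  symm := by
    constructor
    intro x y h
    refine ⟨h.1.symm, ?_⟩
    rw [Sym2.eq_swap]
    exact h.2
  loopless := ⟨fun x h => G.loopless.irrefl x h.1⟩

/-- Consecutive edges alternate between `M` and non-`M`. -/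
def altRel {W : Type u} (M : Set (Sym2 W)) (e e' : Sym2 W) : Prop := e ∈ M ↔ e' ∉ M

/-- An alternating path (with respect to `M`) in a graph `G'`. -/
def IsAltPath {W : Type u} (M : Set (Sym2 W)) {G' : SimpleGraph W} {x y : W}
    (p : G'.Walk x y) : Prop :=
  p.IsPath ∧ List.Chain' (altRel M) p.edges ∧
    (∀ e, p.edges.head? = some e → e ∉ M → ¬ Matched M x) ∧
    (∀ e, p.edges.getLast? = some e → e ∉ M → ¬ Matched M y)

/-- An alternating cycle (with respect to `M`) in a graph `G'`:
the edges alternate cyclically between `M` and non-`M`. -/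
def IsAltCycle {W : Type u} (M : Set (Sym2 W)) {G' : SimpleGraph W} {x : W}
    (p : G'.Walk x x) : Prop :=
  p.IsCycle ∧ List.Chain' (altRel M) (p.edges ++ p.edges.take 1)

/-- `l` contains at least one edge labeled `+2`. -/
def OnePlusEdge {W : Type u} (pref : W → W → ℕ) (rk : W → ℕ) (l : List (Sym2 W)) : Prop :=
  ∃ e ∈ l, EdgePlus pref rk e

/-- `l` contains at least two edges labeled `+2`. -/
def TwoPlusEdges {W : Type u} (pref : W → W → ℕ) (rk : W → ℕ) (l : List (Sym2 W)) : Prop :=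
  ∃ e ∈ l, ∃ e' ∈ l, e ≠ e' ∧ EdgePlus pref rk e ∧ EdgePlus pref rk e'

/-- A vertex cover. -/
def IsVC {V : Type u} (G : SimpleGraph V) (U : Set V) : Prop :=
  ∀ ⦃x y : V⦄, G.Adj x y → x ∈ U ∨ y ∈ U
/-- An instance of Partitioned Vertex Cover: `G` is a finite simple graph, `P` is a
collection of pairwise disjoint edges of `G`, `T` is a collection of pairwise disjoint
3-element vertex sets each inducing a triangle in `G`, and every vertex of `G` lies in
exactly one member of `P ∪ T`. -/
def IsPVC {V : Type u} (G : SimpleGraph V) (P : Set (Sym2 V)) (T : Set (Finset V)) : Prop :=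
  Finite V ∧
  P ⊆ G.edgeSet ∧
  (∀ e ∈ P, ∀ e' ∈ P, e ≠ e' → ∀ v : V, v ∈ e → v ∉ e') ∧
  (∀ t ∈ T, t.card = 3) ∧
  (∀ t ∈ T, ∀ x ∈ t, ∀ y ∈ t, x ≠ y → G.Adj x y) ∧
  (∀ t ∈ T, ∀ t' ∈ T, t ≠ t' → ∀ v : V, v ∈ t → v ∉ t') ∧
  (∀ v : V, (∃ e ∈ P, v ∈ e) ∨ (∃ t ∈ T, v ∈ t)) ∧
  (∀ v : V, ¬ ((∃ e ∈ P, v ∈ e) ∧ (∃ t ∈ T, v ∈ t)))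

/-- A solution of a Partitioned Vertex Cover instance: a vertex cover `U` with
`|U ∩ P| = 1` for every pair `P` and `|U ∩ T| = 2` for every triple `T`. -/
def IsPVCSolution {V : Type u} (G : SimpleGraph V) (P : Set (Sym2 V)) (T : Set (Finset V))
    (U : Set V) : Prop :=
  IsVC G U ∧
  (∀ e ∈ P, {x : V | x ∈ e ∧ x ∈ U}.ncard = 1) ∧
  (∀ t ∈ T, {x : V | x ∈ t ∧ x ∈ U}.ncard = 2)

/-- The vertices of the graph `H` built from a Partitioned Vertex Cover instance:
`a i`, `b i`, `c i`, `d i` for a vertex `i` of `G`; `u i j` is the vertex `u^e_i` for the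
edge `e = {i,j}` of `G`; `f i j` is the vertex `f_{ij}` for the pair `{i,j} ∈ P`. -/
inductive Gad (V : Type u) : Type u where
  | a : V → Gad V
  | b : V → Gad V
  | c : V → Gad V
  | d : V → Gad V
  | u : V → V → Gad V
  | f : V → V → Gad V
deriving DecidableEq

/-- Which formal gadget vertices are really vertices of `H`. -/
def Gad.valid {V : Type u} (G : SimpleGraph V) (P : Set (Sym2 V)) : Gad V → Prop
  | .u i j => G.Adj i j
  | .f i j => s(i, j) ∈ P
  | _ => True

/-- The edges of `H`, up to symmetry. -/
inductive HBase {V : Type u} (G : SimpleGraph V) (P : Set (Sym2 V)) (T : Set (Finset V)) :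
    Gad V → Gad V → Prop where
  | da (i : V) : HBase G P T (.d i) (.a i)
  | ab (i : V) : HBase G P T (.a i) (.b i)
  | ac (i : V) : HBase G P T (.a i) (.c i)
  | bc (i : V) : HBase G P T (.b i) (.c i)
  | uu {i j : V} (h : G.Adj i j) : HBase G P T (.u i j) (.u j i)
  | bu {i j : V} (h : G.Adj i j) : HBase G P T (.b i) (.u i j)
  | df {i j : V} (h : s(i, j) ∈ P) : HBase G P T (.d i) (.f i j)
  | fc {i j : V} (h : s(i, j) ∈ P) : HBase G P T (.f i j) (.c j)
  | cd {i j : V} (h : s(i, j) ∈ P) : HBase G P T (.c i) (.d j)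
  | dd {i j : V} {t : Finset V} (ht : t ∈ T) (hi : i ∈ t) (hj : j ∈ t) (hne : i ≠ j) :
      HBase G P T (.d i) (.d j)
  | cc {i j : V} {t : Finset V} (ht : t ∈ T) (hi : i ∈ t) (hj : j ∈ t) (hne : i ≠ j) :
      HBase G P T (.c i) (.c j)

/-- The graph `H` of the Popular Matching instance built from `(G, P, T)`. -/
def Hgraph {V : Type u} (G : SimpleGraph V) (P : Set (Sym2 V)) (T : Set (Finset V)) :
    SimpleGraph {g : Gad V // Gad.valid G P g} where
  Adj x y := x ≠ y ∧ (HBase G P T x.1 y.1 ∨ HBase G P T y.1 x.1)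
  symm := ⟨fun _ _ h => ⟨h.1.symm, h.2.symm⟩⟩
  loopless := ⟨fun _ h => h.1 rfl⟩

/-- The Popular Matching instance (graph together with preference lists) constructed
from a Partitioned Vertex Cover instance `(G, P, T)`.  The field `pref` gives the
preference lists; all its values on the neighborhoods in `H` are pinned down, except
the ranks that `b i` assigns to the vertices `u^e_i`, which form an arbitrary fixed
bijection onto `{2, …, deg_G(i) + 1}`. -/
structure Reduction (V : Type u) [LinearOrder V] : Type u where
  G : SimpleGraph V
  P : Set (Sym2 V)
  T : Set (Finset V)
  ispvc : IsPVC G P T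
  pref : Gad V → Gad V → ℕ
  pref_ab : ∀ i : V, pref (.a i) (.b i) = 1
  pref_ac : ∀ i : V, pref (.a i) (.c i) = 2
  pref_ad : ∀ i : V, pref (.a i) (.d i) = 3
  pref_ba : ∀ i : V, pref (.b i) (.a i) = 1
  pref_bu : ∀ i : V, Set.BijOn (pref (.b i)) {g : Gad V | ∃ j : V, G.Adj i j ∧ g = .u i j}
      (Set.Icc 2 ((G.neighborSet i).ncard + 1))
  pref_bc : ∀ i : V, pref (.b i) (.c i) = (G.neighborSet i).ncard + 2
  pref_ca : ∀ i : V, pref (.c i) (.a i) = 1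
  pref_cb : ∀ i : V, pref (.c i) (.b i) = 2
  pref_da : ∀ i : V, pref (.d i) (.a i) = 1
  pref_uu : ∀ i j : V, G.Adj i j → pref (.u i j) (.u j i) = 1
  pref_ub : ∀ i j : V, G.Adj i j → pref (.u i j) (.b i) = 2
  pref_cf : ∀ i j : V, s(i, j) ∈ P → pref (.c i) (.f j i) = 3
  pref_cd : ∀ i j : V, s(i, j) ∈ P → pref (.c i) (.d j) = 4
  pref_dc : ∀ i j : V, s(i, j) ∈ P → pref (.d i) (.c j) = 2
  pref_df : ∀ i j : V, s(i, j) ∈ P → pref (.d i) (.f i j) = 3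
  pref_fd : ∀ i j : V, s(i, j) ∈ P → pref (.f i j) (.d i) = 1
  pref_fc : ∀ i j : V, s(i, j) ∈ P → pref (.f i j) (.c j) = 2
  pref_tri : ∀ t ∈ T, ∀ i j k : V, t = {i, j, k} → i < j → j < k →
    pref (.c i) (.c k) = 3 ∧ pref (.c i) (.c j) = 4 ∧
    pref (.c j) (.c i) = 3 ∧ pref (.c j) (.c k) = 4 ∧
    pref (.c k) (.c j) = 3 ∧ pref (.c k) (.c i) = 4 ∧
    pref (.d i) (.d j) = 2 ∧ pref (.d i) (.d k) = 3 ∧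
    pref (.d j) (.d k) = 2 ∧ pref (.d j) (.d i) = 3 ∧
    pref (.d k) (.d i) = 2 ∧ pref (.d k) (.d j) = 3

namespace Reduction

variable {V : Type u} [LinearOrder V] (R : Reduction V)

/-- The vertex set of `H`. -/
abbrev HV : Type u := {g : Gad V // Gad.valid R.G R.P g}

/-- The graph `H`. -/
def H : SimpleGraph R.HV := Hgraph R.G R.P R.T

/-- The preference lists of `H`, as a function on its vertices. -/
def prefH : R.HV → R.HV → ℕ := fun x y => R.pref x.1 y.1

/-- The vertex `a_i` of `H`. -/
def va (i : V) : R.HV := ⟨.a i, trivial⟩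
/-- The vertex `b_i` of `H`. -/
def vb (i : V) : R.HV := ⟨.b i, trivial⟩
/-- The vertex `c_i` of `H`. -/
def vc (i : V) : R.HV := ⟨.c i, trivial⟩
/-- The vertex `d_i` of `H`. -/
def vd (i : V) : R.HV := ⟨.d i, trivial⟩
/-- The vertex `u^e_i` of `H`, for an edge `e = {i,j}` of `G`. -/
def vu (i j : V) (h : R.G.Adj i j) : R.HV := ⟨.u i j, h⟩
/-- The vertex `f_{ij}` of `H`, for a pair `{i,j} ∈ P`. -/
def vf (i j : V) (h : s(i, j) ∈ R.P) : R.HV := ⟨.f i j, h⟩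

/-- The matching `M*` in `H` constructed from a solution `U`. -/
def Mstar (U : Set V) : Set (Sym2 R.HV) :=
  {e : Sym2 R.HV |
    (∃ (i j : V) (h : R.G.Adj i j), e = s(R.vu i j h, R.vu j i h.symm)) ∨
    (∃ (x y : V) (h : s(x, y) ∈ R.P) (h' : s(y, x) ∈ R.P), x ∉ U ∧ y ∈ U ∧
      (e = s(R.va x, R.vd x) ∨ e = s(R.vb x, R.vc x) ∨ e = s(R.va y, R.vb y) ∨
       e = s(R.vf x y h, R.vc y) ∨ e = s(R.vf y x h', R.vd y))) ∨
    (∃ t ∈ R.T, ∃ x y z : V, t = {x, y, z} ∧ x ∉ U ∧ y ∈ U ∧ z ∈ U ∧ y ≠ z ∧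
      R.pref (.d x) (.d y) < R.pref (.d x) (.d z) ∧
      (e = s(R.va x, R.vd x) ∨ e = s(R.vb x, R.vc x) ∨ e = s(R.va y, R.vb y) ∨
       e = s(R.va z, R.vb z) ∨ e = s(R.vc y, R.vc z) ∨ e = s(R.vd y, R.vd z)))}

end Reduction

/-- The vertex set of the Pair Selector gadget associated with a pair `{i,j}`. -/
def pairGadget {V : Type u} (i j : V) : Set (Gad V) :=
  {g : Gad V | ∃ x : V, (x = i ∨ x = j) ∧ (g = .a x ∨ g = .b x ∨ g = .c x ∨ g = .d x)} ∪
    {Gad.f i j, Gad.f j i}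

/-- The vertex set of the Triple Selector gadget associated with a triple `t`. -/
def tripleGadget {V : Type u} (t : Finset V) : Set (Gad V) :=
  {g : Gad V | ∃ x ∈ t, g = .a x ∨ g = .b x ∨ g = .c x ∨ g = .d x}

section AuxCycle

variable {W : Type u} {G' : SimpleGraph W}

lemma head_edge_of_not_nil {a x : W} (q : G'.Walk a x) (h : ¬ q.Nil) :
    ∃ w, G'.Adj a w ∧ w ∈ q.support ∧ q.edges.head? = some s(a, w) := by
  obtain ⟨u, hadj, q', rfl⟩ := SimpleGraph.Walk.not_nil_iff.mp h
  exact ⟨u, hadj, by simp, by simp⟩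

lemma list_head_ne_last {α : Type*} {l : List α} (hnd : l.Nodup) (hlen : 2 ≤ l.length) {e : α}
    (h1 : l.head? = some e) (h2 : l.reverse.head? = some e) : False := by
  match l, hnd, hlen, h1, h2 with
  | a :: b :: rest, hnd, _, h1, h2 =>
    have ha : a = e := by simpa using h1
    rw [List.head?_reverse] at h2
    rw [List.getLast?_cons_cons] at h2
    have hmem : e ∈ b :: rest := by
      obtain ⟨h', he⟩ := List.mem_getLast?_eq_getLast (l := b :: rest) (x := e) h2
      exact he ▸ List.getLast_mem h'
    have : a ∉ b :: rest := (List.nodup_cons.mp hnd).1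
    exact this (ha ▸ hmem)

lemma cycle_two_neighbors {v : W} (q : G'.Walk v v) (hq : q.IsCycle) :
    ∃ w₁ w₂, w₁ ≠ w₂ ∧ G'.Adj v w₁ ∧ G'.Adj v w₂ ∧ w₁ ∈ q.support ∧ w₂ ∈ q.support := by
  have hn : ¬ q.Nil := hq.not_nil
  obtain ⟨w₁, ha1, hs1, he1⟩ := head_edge_of_not_nil q hn
  have hnr : ¬ q.reverse.Nil := by
    rw [SimpleGraph.Walk.not_nil_iff_lt_length] at hn ⊢; simpa using hn
  obtain ⟨w₂, ha2, hs2, he2⟩ := head_edge_of_not_nil q.reverse hnr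
  refine ⟨w₁, w₂, ?_, ha1, ha2, hs1, by
    simpa [SimpleGraph.Walk.support_reverse] using hs2⟩
  rintro rfl
  rw [SimpleGraph.Walk.edges_reverse] at he2
  have hlen : 2 ≤ q.edges.length := by
    have := hq.three_le_length
    rw [SimpleGraph.Walk.length_edges]; omega
  exact list_head_ne_last hq.edges_nodup hlen he1 he2

lemma cycle_two_neighbors' {x v : W} (p : G'.Walk x x) (hp : p.IsCycle) (hv : v ∈ p.support) :
    ∃ w₁ w₂, w₁ ≠ w₂ ∧ G'.Adj v w₁ ∧ G'.Adj v w₂ ∧ w₁ ∈ p.support ∧ w₂ ∈ p.support := by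
  haveI := Classical.decEq W
  obtain ⟨w₁, w₂, hne, ha1, ha2, hs1, hs2⟩ :=
    cycle_two_neighbors (p.rotate _ hv) (hp.rotate hv)
  have hsub : ∀ w, w ∈ (p.rotate _ hv).support → w ∈ p.support := by
    intro w hw
    rw [SimpleGraph.Walk.support_eq_cons (p.rotate _ hv)] at hw
    rcases List.mem_cons.mp hw with rfl | hw
    · exact hv
    · have hrot := SimpleGraph.Walk.support_rotate p _ hv
      have : w ∈ p.support.tail := hrot.mem_iff.mp hw
      exact List.mem_of_mem_tail this
  exact ⟨w₁, w₂, hne, ha1, ha2, hsub _ hs1, hsub _ hs2⟩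

end AuxCycle

namespace Reduction

variable {V : Type u} [LinearOrder V] (R : Reduction V) (U : Set V)

lemma u_neighbors {i j : V} {h : Gad.valid R.G R.P (Gad.u i j)} {w : R.HV}
    (hadj : R.H.Adj ⟨.u i j, h⟩ w) : w.1 = Gad.u j i ∨ w.1 = Gad.b i := by
  obtain ⟨g, hgv⟩ := w
  obtain ⟨-, hb | hb⟩ := hadj
  · cases hb with
    | uu h' => exact Or.inl rfl
  · cases hb with
    | uu h' => exact Or.inl rfl
    | bu h' => exact Or.inr rfl

lemma mstar_u_partner {i j : V} (h : R.G.Adj i j) {w : R.HV}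
    (hm : s((R.vu i j h : R.HV), w) ∈ R.Mstar U) : w = R.vu j i h.symm := by
  simp only [Mstar, Set.mem_setOf_eq] at hm
  rcases hm with ⟨a, b, hab, he⟩ |
    ⟨x, y, h1, h2, hx, hy, he | he | he | he | he⟩ |
    ⟨t, ht, x, y, z, ht2, hx, hy, hz, hyz, hlt, he | he | he | he | he | he⟩
  all_goals
    simp only [Reduction.vu, Reduction.va, Reduction.vb, Reduction.vc, Reduction.vd,
      Reduction.vf, Sym2.eq_iff, Subtype.ext_iff, reduceCtorEq, Gad.u.injEq, Gad.a.injEq,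
      Gad.b.injEq, Gad.c.injEq, Gad.d.injEq, Gad.f.injEq, false_and, and_false, false_or,
      or_false] at he
  · obtain ⟨⟨rfl, rfl⟩, hw⟩ | ⟨⟨rfl, rfl⟩, hw⟩ := he <;> exact Subtype.ext hw

lemma mstar_b_partner {i : V} (hi : i ∈ U) {w : R.HV}
    (hm : s((R.vb i : R.HV), w) ∈ R.Mstar U) : w = R.va i := by
  simp only [Mstar, Set.mem_setOf_eq] at hm
  rcases hm with ⟨a, b, hab, he⟩ |
    ⟨x, y, h1, h2, hx, hy, he | he | he | he | he⟩ |
    ⟨t, ht, x, y, z, ht2, hx, hy, hz, hyz, hlt, he | he | he | he | he | he⟩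
  all_goals
    simp only [Reduction.vu, Reduction.va, Reduction.vb, Reduction.vc, Reduction.vd,
      Reduction.vf, Sym2.eq_iff, Subtype.ext_iff, reduceCtorEq, Gad.u.injEq, Gad.a.injEq,
      Gad.b.injEq, Gad.c.injEq, Gad.d.injEq, Gad.f.injEq, false_and, and_false, false_or,
      or_false] at he
  · obtain ⟨rfl, -⟩ := he; exact absurd hi hx
  · obtain ⟨rfl, hw⟩ := he; exact Subtype.ext hw
  · obtain ⟨rfl, -⟩ := he; exact absurd hi hx
  · obtain ⟨rfl, hw⟩ := he; exact Subtype.ext hw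
  · obtain ⟨rfl, hw⟩ := he; exact Subtype.ext hw

lemma bu_not_mem {i j : V} (h : R.G.Adj i j) :
    s((R.vb i : R.HV), R.vu i j h) ∉ R.Mstar U := by
  intro hm
  simp only [Mstar, Set.mem_setOf_eq] at hm
  rcases hm with ⟨a, b, hab, he⟩ |
    ⟨x, y, h1, h2, hx, hy, he | he | he | he | he⟩ |
    ⟨t, ht, x, y, z, ht2, hx, hy, hz, hyz, hlt, he | he | he | he | he | he⟩
  all_goals
    simp only [Reduction.vu, Reduction.va, Reduction.vb, Reduction.vc, Reduction.vd,
      Reduction.vf, Sym2.eq_iff, Subtype.ext_iff, reduceCtorEq, Gad.u.injEq, Gad.a.injEq,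
      Gad.b.injEq, Gad.c.injEq, Gad.d.injEq, Gad.f.injEq, false_and, and_false, false_or,
      or_false] at he

lemma rank_u {i j : V} (h : R.G.Adj i j) :
    rank R.H R.prefH (R.Mstar U) (R.vu i j h) = 1 := by
  have hex : ∃ w : R.HV, s((R.vu i j h : R.HV), w) ∈ R.Mstar U :=
    ⟨R.vu j i h.symm, by simp only [Mstar, Set.mem_setOf_eq]; exact Or.inl ⟨i, j, h, rfl⟩⟩
  rw [rank, dif_pos hex, R.mstar_u_partner U h hex.choose_spec]
  exact R.pref_uu i j h

lemma sort3 {a b c : V} (hab : a ≠ b) (hac : a ≠ c) (hbc : b ≠ c) :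
    ∃ p q r : V, p < q ∧ q < r ∧ ({a, b, c} : Finset V) = {p, q, r} := by
  rcases hab.lt_or_gt with h1 | h1 <;> rcases hac.lt_or_gt with h2 | h2 <;>
    rcases hbc.lt_or_gt with h3 | h3
  · exact ⟨a, b, c, h1, h3, rfl⟩
  · exact ⟨a, c, b, h2, h3,
      by ext x; simp only [Finset.mem_insert, Finset.mem_singleton]; tauto⟩
  · exact absurd (h1.trans h3) (lt_asymm h2)
  · exact ⟨c, a, b, h2, h1,
      by ext x; simp only [Finset.mem_insert, Finset.mem_singleton]; tauto⟩
  · exact ⟨b, a, c, h1, h2,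
      by ext x; simp only [Finset.mem_insert, Finset.mem_singleton]; tauto⟩
  · exact absurd (h2.trans h3) (lt_asymm h1)
  · exact ⟨b, c, a, h3, h2,
      by ext x; simp only [Finset.mem_insert, Finset.mem_singleton]; tauto⟩
  · exact ⟨c, b, a, h3, h1,
      by ext x; simp only [Finset.mem_insert, Finset.mem_singleton]; tauto⟩

set_option maxHeartbeats 1600000 in
lemma mstar_b_exists (hU : IsPVCSolution R.G R.P R.T U) {i : V} (hi : i ∈ U) :
    s((R.va i : R.HV), R.vb i) ∈ R.Mstar U := by
  obtain ⟨hfin, hPsub, hPdisj, hTcard, hTtri, hTdisj, hcover, hno⟩ := R.ispvc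
  simp only [Mstar, Set.mem_setOf_eq]
  rcases hcover i with ⟨e, heP, hie⟩ | ⟨t, htT, hit⟩
  · -- pair case
    induction e using Sym2.ind with
    | _ a b =>
      have hadj : R.G.Adj a b := hPsub heP
      have key : ∀ z : V, z ≠ i → s(i, z) ∈ R.P → R.G.Adj i z →
          (∃ x y, (∃ h : s(x, y) ∈ R.P, ∃ h' : s(y, x) ∈ R.P, x ∉ U ∧ y ∈ U ∧
            (s((R.va i : R.HV), R.vb i) = s(R.va x, R.vd x) ∨
             s((R.va i : R.HV), R.vb i) = s(R.vb x, R.vc x) ∨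
             s((R.va i : R.HV), R.vb i) = s(R.va y, R.vb y) ∨
             s((R.va i : R.HV), R.vb i) = s(R.vf x y h, R.vc y) ∨
             s((R.va i : R.HV), R.vb i) = s(R.vf y x h', R.vd y)))) := by
        intro z hzi hziP hadj'
        have hz : z ∉ U := by
          intro hzU
          have h1 := hU.2.1 _ hziP
          have heq : {x : V | x ∈ s(i, z) ∧ x ∈ U} = {i, z} := by
            ext x
            simp only [Set.mem_setOf_eq, Sym2.mem_iff, Set.mem_insert_iff,
              Set.mem_singleton_iff]
            constructor
            · rintro ⟨hx, -⟩; exact hx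
            · rintro (rfl | rfl)
              · exact ⟨Or.inl rfl, hi⟩
              · exact ⟨Or.inr rfl, hzU⟩
          rw [heq, Set.ncard_pair (Ne.symm hzi)] at h1
          omega
        exact ⟨z, i, ⟨by rwa [Sym2.eq_swap] at hziP, hziP, hz, hi,
          Or.inr (Or.inr (Or.inl rfl))⟩⟩
      rcases (Sym2.mem_iff).mp hie with rfl | rfl
      · exact Or.inr (Or.inl (key b hadj.ne' heP hadj))
      · exact Or.inr (Or.inl (key a hadj.ne (by rwa [Sym2.eq_swap] at heP) hadj.symm))
  · -- triple case
    have hcard := hTcard t htT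
    obtain ⟨a, b, c, hab, hac, hbc, rfl⟩ := Finset.card_eq_three.mp hcard
    obtain ⟨p, q, r, hpq, hqr, htpqr⟩ := sort3 hab hac hbc
    rw [htpqr] at hit htT
    have hpr : p < r := hpq.trans hqr
    obtain ⟨e1, e2, e3, e4, e5, e6, e7, e8, e9, e10, e11, e12⟩ :=
      R.pref_tri _ htT p q r rfl hpq hqr
    have hncard := hU.2.2 _ htT
    have hone : ∀ u1 u2 u3 : V, ({p, q, r} : Finset V) = {u1, u2, u3} → u1 ∉ U → u2 ∉ U →
        u3 ∈ U → False := by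
      intro u1 u2 u3 hset h1 h2 h3
      have hsub : {x : V | x ∈ ({p, q, r} : Finset V) ∧ x ∈ U} ⊆ {u3} := by
        rintro x ⟨hx1, hx2⟩
        rw [hset] at hx1
        simp only [Finset.mem_insert, Finset.mem_singleton] at hx1
        rcases hx1 with rfl | rfl | rfl
        · exact absurd hx2 h1
        · exact absurd hx2 h2
        · rfl
      have := Set.ncard_le_ncard hsub (Set.finite_singleton _)
      rw [Set.ncard_singleton] at this
      omega
    have hall : ¬ (p ∈ U ∧ q ∈ U ∧ r ∈ U) := by
      rintro ⟨h1, h2, h3⟩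
      have heq : {x : V | x ∈ ({p, q, r} : Finset V) ∧ x ∈ U} = {p, q, r} := by
        ext x
        simp only [Set.mem_setOf_eq, Finset.mem_insert, Finset.mem_singleton,
          Set.mem_insert_iff, Set.mem_singleton_iff]
        constructor
        · rintro ⟨hx, -⟩; exact hx
        · rintro (rfl | rfl | rfl)
          · exact ⟨Or.inl rfl, h1⟩
          · exact ⟨Or.inr (Or.inl rfl), h2⟩
          · exact ⟨Or.inr (Or.inr rfl), h3⟩
      rw [heq, Set.ncard_insert_of_notMem (by simp [hpq.ne, hpr.ne]),
        Set.ncard_insert_of_notMem (by simp [hqr.ne]), Set.ncard_singleton] at hncard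
      omega
    have himem : i = p ∨ i = q ∨ i = r := by
      simpa only [Finset.mem_insert, Finset.mem_singleton] using hit
    by_cases hp : p ∈ U <;> by_cases hq : q ∈ U <;> by_cases hr : r ∈ U
    · exact absurd ⟨hp, hq, hr⟩ hall
    · -- r ∉ U : x = r, y = p, z = q
      have hset : ({p, q, r} : Finset V) = {r, p, q} := by
        ext x; simp only [Finset.mem_insert, Finset.mem_singleton]; tauto
      have hlt : R.pref (Gad.d r) (Gad.d p) < R.pref (Gad.d r) (Gad.d q) := by
        rw [e11, e12]; omega
      refine Or.inr (Or.inr ⟨{p, q, r}, htT, r, p, q, hset, hr, hp, hq, hpq.ne, hlt, ?_⟩)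
      rcases himem with rfl | rfl | rfl
      · exact Or.inr (Or.inr (Or.inl rfl))
      · exact Or.inr (Or.inr (Or.inr (Or.inl rfl)))
      · exact absurd hi hr
    · -- q ∉ U : x = q, y = r, z = p
      have hset : ({p, q, r} : Finset V) = {q, r, p} := by
        ext x; simp only [Finset.mem_insert, Finset.mem_singleton]; tauto
      have hlt : R.pref (Gad.d q) (Gad.d r) < R.pref (Gad.d q) (Gad.d p) := by
        rw [e9, e10]; omega
      refine Or.inr (Or.inr ⟨{p, q, r}, htT, q, r, p, hset, hq, hr, hp, hpr.ne', hlt, ?_⟩)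
      rcases himem with rfl | rfl | rfl
      · exact Or.inr (Or.inr (Or.inr (Or.inl rfl)))
      · exact absurd hi hq
      · exact Or.inr (Or.inr (Or.inl rfl))
    · exact (hone q r p (by
        ext x; simp only [Finset.mem_insert, Finset.mem_singleton]; tauto) hq hr hp).elim
    · -- p ∉ U : x = p, y = q, z = r
      have hlt : R.pref (Gad.d p) (Gad.d q) < R.pref (Gad.d p) (Gad.d r) := by
        rw [e7, e8]; omega
      refine Or.inr (Or.inr ⟨{p, q, r}, htT, p, q, r, rfl, hp, hq, hr, hqr.ne, hlt, ?_⟩)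
      rcases himem with rfl | rfl | rfl
      · exact absurd hi hp
      · exact Or.inr (Or.inr (Or.inl rfl))
      · exact Or.inr (Or.inr (Or.inr (Or.inl rfl)))
    · exact (hone p r q (by
        ext x; simp only [Finset.mem_insert, Finset.mem_singleton]; tauto) hp hr hq).elim
    · exact (hone p q r rfl hp hq hr).elim
    · rcases himem with rfl | rfl | rfl
      · exact absurd hi hp
      · exact absurd hi hq
      · exact absurd hi hr

lemma rank_b (hU : IsPVCSolution R.G R.P R.T U) {i : V} (hi : i ∈ U) :
    rank R.H R.prefH (R.Mstar U) (R.vb i) = 1 := by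
  have hex : ∃ w : R.HV, s((R.vb i : R.HV), w) ∈ R.Mstar U :=
    ⟨R.va i, by rw [Sym2.eq_swap]; exact R.mstar_b_exists U hU hi⟩
  rw [rank, dif_pos hex, R.mstar_b_partner U hi hex.choose_spec]
  exact R.pref_ba i

lemma not_adj_bu (hU : IsPVCSolution R.G R.P R.T U) {i j : V} (h : R.G.Adj i j)
    (hi : i ∈ U) :
    ¬ (GMgraph R.H R.prefH (R.Mstar U)).Adj (R.vu i j h) (R.vb i) := by
  rintro ⟨-, hmem | hnm⟩
  · exact R.bu_not_mem U h (by rwa [Sym2.eq_swap] at hmem)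
  · apply hnm
    refine ⟨R.vb i, R.vu i j h, Sym2.eq_swap, ?_, ?_⟩
    · rw [R.rank_b U hU hi]
      have hmaps := (R.pref_bu i).mapsTo (show (Gad.u i j : Gad V) ∈
        {g : Gad V | ∃ j' : V, R.G.Adj i j' ∧ g = .u i j'} from ⟨j, h, rfl⟩)
      have h2 : 2 ≤ R.prefH (R.vb i) (R.vu i j h) := hmaps.1
      omega
    · rw [R.rank_u U h]
      have h2 : R.prefH (R.vu i j h) (R.vb i) = 2 := R.pref_ub i j h
      omega

lemma no_u_in_support (hU : IsPVCSolution R.G R.P R.T U) {i j : V} (h : R.G.Adj i j)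
    (hi : i ∈ U) {x : R.HV} {p : (GMgraph R.H R.prefH (R.Mstar U)).Walk x x}
    (hp : p.IsCycle) (hv : R.vu i j h ∈ p.support) : False := by
  obtain ⟨w₁, w₂, hne, ha1, ha2, -, -⟩ := cycle_two_neighbors' p hp hv
  have key : ∀ w, (GMgraph R.H R.prefH (R.Mstar U)).Adj (R.vu i j h) w →
      w = R.vu j i h.symm := by
    intro w hw
    rcases R.u_neighbors hw.1 with h1 | h1
    · exact Subtype.ext h1
    · exfalso
      have hwb : w = R.vb i := Subtype.ext h1
      exact R.not_adj_bu U hU h hi (hwb ▸ hw)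
  exact hne ((key w₁ ha1).trans (key w₂ ha2).symm)

end Reduction

/-- No alternating cycle in `H_{M*}` contains a vertex `u^e_i`. -/
theorem no_alt_cycle_through_u {V : Type u} [LinearOrder V] (R : Reduction V)
    (U : Set V) (hU : IsPVCSolution R.G R.P R.T U) :
    ¬ ∃ (x : R.HV) (p : (GMgraph R.H R.prefH (R.Mstar U)).Walk x x),
      IsAltCycle (R.Mstar U) p ∧ ∃ v ∈ p.support, ∃ i j : V, v.1 = Gad.u i j := by
  rintro ⟨x, p, ⟨hcyc, -⟩, v, hv, i, j, hvij⟩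
  have hval : R.G.Adj i j := by
    have h2 := v.2
    rw [hvij] at h2
    exact h2
  have hv' : v = R.vu i j hval := Subtype.ext hvij
  rw [hv'] at hv
  rcases hU.1 hval with hi | hj
  · exact R.no_u_in_support U hU hval hi hcyc hv
  · obtain ⟨w₁, w₂, hne, ha1, ha2, hs1, hs2⟩ := cycle_two_neighbors' p hcyc hv
    rcases R.u_neighbors ha1.1 with h1 | h1
    · exact R.no_u_in_support U hU hval.symm hj hcyc
        (by rwa [show w₁ = R.vu j i hval.symm from Subtype.ext h1] at hs1)
    · rcases R.u_neighbors ha2.1 with h2 | h2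
      · exact R.no_u_in_support U hU hval.symm hj hcyc
          (by rwa [show w₂ = R.vu j i hval.symm from Subtype.ext h2] at hs2)
      · exact hne (Subtype.ext (h1.trans h2.symm))
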